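/- For t with 1 ≤ t ≤ 4: if Δ ⊆ ℕ×ℕ is a down-set with |Δ| ≤ t−1 (so that adding at least one point keeps size ≤ t), s ∈ ℕ×ℕ is a minimal element of the complement of Δ, and l = (l₁,l₂) satisfies l ⪰ s and l − s ∉ Δ, and the down-set generated by Δ ∪ {l−s} (i.e., Δ ∪ Δ_{l−s} where Δ_{l−s} = {n : n ⪯ l−s}) has cardinality at most t, then (l₁+1)(l₂+1) ≤ 2t+1. -/

import Mathlib

/-- A set Δ ⊆ ℕ × ℕ is a down-set for the componentwise order. -/
def IsDownset (Δ : Set (ℕ × ℕ)) : Prop :=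
  ∀ m ∈ Δ, ∀ n : ℕ × ℕ, n.1 ≤ m.1 → n.2 ≤ m.2 → n ∈ Δ

lemma ncard_Iic_prod (m : ℕ × ℕ) : (Set.Iic m).ncard = (m.1 + 1) * (m.2 + 1) := by
  rw [← Finset.coe_Iic, Set.ncard_coe_finset, Finset.card_Iic_prod, Nat.card_Iic, Nat.card_Iic]

set_option synthInstance.maxSize 2000 in
set_option synthInstance.maxHeartbeats 1000000 in
set_option maxHeartbeats 2000000 in
lemma arith0 : ∀ t < 5, ∀ a < 4, ∀ b < 4, ∀ c < 4, ∀ e < 4,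
    1 ≤ t → (a+1)*(b+1) ≤ t → (c+1)*(e+1) ≤ t →
    (a+1)*(b+1) + (c+1)*(e+1) ≤ t + 1 + (min a c + 1)*(min b e + 1) →
    (a+c+1)*(b+e+1) ≤ 2*t+1 := by decide

/-- Lemma "cota para l₁+1 por l₂+1": for 1 ≤ t ≤ 4, if Δ is a finite down-set with
|Δ| ≤ t − 1, s a minimal element of its complement, l ⪰ s with l − s ∉ Δ, and the
down-set Δ ∪ Δ_{l−s} has at most t elements, then (l₁+1)(l₂+1) ≤ 2t+1. -/
theorem stmt12 (t : ℕ) (h1 : 1 ≤ t) (h2 : t ≤ 4)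
    (Δ : Set (ℕ × ℕ)) (hΔ : IsDownset Δ) (hfin : Δ.Finite) (hcard : Δ.ncard ≤ t - 1)
    (s : ℕ × ℕ) (hs : s ∉ Δ)
    (hsmin : ∀ s' : ℕ × ℕ, s' ∉ Δ → s'.1 ≤ s.1 → s'.2 ≤ s.2 → s' = s)
    (l : ℕ × ℕ) (hls : s.1 ≤ l.1 ∧ s.2 ≤ l.2)
    (hnot : (l.1 - s.1, l.2 - s.2) ∉ Δ)
    (hgrow : (Δ ∪ {n : ℕ × ℕ | n.1 ≤ l.1 - s.1 ∧ n.2 ≤ l.2 - s.2}).ncard ≤ t) :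
    (l.1 + 1) * (l.2 + 1) ≤ 2 * t + 1 := by
  set d : ℕ × ℕ := (l.1 - s.1, l.2 - s.2) with hd
  have hBset : {n : ℕ × ℕ | n.1 ≤ l.1 - s.1 ∧ n.2 ≤ l.2 - s.2} = Set.Iic d := by
    ext n; simp [Set.mem_Iic, Prod.le_def, hd]
  set A : Set (ℕ × ℕ) := Set.Iic s \ {s} with hA
  set B : Set (ℕ × ℕ) := Set.Iic d with hB
  have hAfin : A.Finite := (Set.finite_Iic s).diff
  have hBfin : B.Finite := Set.finite_Iic d
  -- A ⊆ Δ
  have hAsub : A ⊆ Δ := by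
    rintro x ⟨hx1, hx2⟩
    by_contra hxΔ
    exact hx2 (hsmin x hxΔ hx1.1 hx1.2)
  -- cardinalities
  have hcardA : A.ncard = (s.1 + 1) * (s.2 + 1) - 1 := by
    rw [hA, Set.ncard_diff_singleton_of_mem (Set.mem_Iic.2 le_rfl),
      ncard_Iic_prod]
  have hcardB : B.ncard = (d.1 + 1) * (d.2 + 1) := ncard_Iic_prod d
  -- (s₁+1)(s₂+1) - 1 ≤ t - 1
  have hAle : (s.1 + 1) * (s.2 + 1) - 1 ≤ t - 1 := by
    rw [← hcardA]; exact (Set.ncard_le_ncard hAsub hfin).trans hcard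
  -- (d₁+1)(d₂+1) ≤ t
  have hBle : (d.1 + 1) * (d.2 + 1) ≤ t := by
    rw [← hcardB]
    refine (Set.ncard_le_ncard ?_ (hfin.union hBfin)).trans ?_
    · exact Set.subset_union_right
    · rwa [hBset] at hgrow
  -- union bound
  have hUle : (A ∪ B).ncard ≤ t := by
    refine (Set.ncard_le_ncard ?_ (hfin.union hBfin)).trans ?_
    · exact Set.union_subset_union_left B hAsub
    · rwa [hBset] at hgrow
  have hIle : (A ∩ B).ncard ≤ (min s.1 d.1 + 1) * (min s.2 d.2 + 1) := by
    have hsub : A ∩ B ⊆ Set.Iic (min s.1 d.1, min s.2 d.2) := by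
      rintro x ⟨⟨hx1, _⟩, hx2⟩
      rw [Set.mem_Iic] at hx1 hx2 ⊢
      exact ⟨le_min hx1.1 hx2.1, le_min hx1.2 hx2.2⟩
    have := Set.ncard_le_ncard hsub (Set.finite_Iic _)
    rwa [ncard_Iic_prod] at this
  have hformula := Set.ncard_union_add_ncard_inter A B hAfin hBfin
  rw [hcardA, hcardB] at hformula
  -- assemble the arithmetic
  have hge1 : 1 ≤ (s.1 + 1) * (s.2 + 1) := Nat.one_le_iff_ne_zero.2 (by positivity)
  have hsle : (s.1 + 1) * (s.2 + 1) ≤ t := by omega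
  have hkey : (s.1 + 1) * (s.2 + 1) + (d.1 + 1) * (d.2 + 1) ≤
      t + 1 + (min s.1 d.1 + 1) * (min s.2 d.2 + 1) := by omega
  have hl1 : l.1 = s.1 + d.1 := by simp [hd]; omega
  have hl2 : l.2 = s.2 + d.2 := by simp [hd]; omega
  have es1 : s.1 + 1 ≤ (s.1 + 1) * (s.2 + 1) := Nat.le_mul_of_pos_right _ (by omega)
  have es2 : s.2 + 1 ≤ (s.1 + 1) * (s.2 + 1) := Nat.le_mul_of_pos_left _ (by omega)
  have ed1 : d.1 + 1 ≤ (d.1 + 1) * (d.2 + 1) := Nat.le_mul_of_pos_right _ (by omega)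
  have ed2 : d.2 + 1 ≤ (d.1 + 1) * (d.2 + 1) := Nat.le_mul_of_pos_left _ (by omega)
  have hs1 : s.1 < 4 := by omega
  have hs2 : s.2 < 4 := by omega
  have hd1 : d.1 < 4 := by omega
  have hd2 : d.2 < 4 := by omega
  have := arith0 t (by omega) s.1 hs1 s.2 hs2 d.1 hd1 d.2 hd2 h1 hsle hBle hkey
  rw [hl1, hl2]
  calc (s.1 + d.1 + 1) * (s.2 + d.2 + 1) ≤ 2 * t + 1 := this
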